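/- Let n be an odd natural number, let a ∈ ℤ^n with support of size t satisfying 1 ≤ t ≤ s ≤ ⌊n/2⌋ for some natural number s with s ≥ 2, let b ∈ ℤ, and let h be the largest even number not exceeding s. Then the number of vectors x ∈ ℝ^n such that exactly one coordinate of x equals 1/2, all other coordinates are in {0,1}, ∑_{i=1}^n x_i = n/2, and b < ⟨a, x⟩ < b + 1, is at most C(n−1, (n−1)/2) · √( 2 n (h+1)² / (π h (n−h−1)) ). -/

import Mathlib

open Finset
open scoped symmDiff

lemma lo_symmDiff_subset {α : Type*} [DecidableEq α] {T' Z N : Finset α}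
    (hZ : Z ⊆ T') (hN : N ⊆ T') : Z ∆ N ⊆ T' := by
  intro i hi
  rw [mem_symmDiff] at hi
  rcases hi with ⟨h, _⟩ | ⟨h, _⟩
  exacts [hZ h, hN h]

lemma lo_sum_indicator {α : Type*} [DecidableEq α] (T' W : Finset α) (f : α → ℤ)
    (hW : W ⊆ T') : ∑ i ∈ W, f i = ∑ i ∈ T', if i ∈ W then f i else 0 := by
  rw [Finset.sum_ite_mem, Finset.inter_eq_right.mpr hW]

lemma lo_symmDiff_sum {α : Type*} [DecidableEq α] (T' Z : Finset α) (a : α → ℤ)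
    (hZ : Z ⊆ T') :
    ∑ i ∈ Z ∆ (T'.filter (fun i => a i < 0)), |a i|
      = ∑ i ∈ Z, a i + ∑ i ∈ T'.filter (fun i => a i < 0), |a i| := by
  set N := T'.filter (fun i => a i < 0) with hN
  have hNsub : N ⊆ T' := filter_subset _ _
  have hsd : Z ∆ N ⊆ T' := lo_symmDiff_subset hZ hNsub
  rw [lo_sum_indicator T' _ _ hsd, lo_sum_indicator T' Z a hZ, lo_sum_indicator T' N _ hNsub,
    ← Finset.sum_add_distrib]
  refine Finset.sum_congr rfl fun i hi => ?_
  by_cases hiZ : i ∈ Z <;> by_cases hiN : i ∈ N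
  · have h1 : i ∉ Z ∆ N := by simp [mem_symmDiff, hiZ, hiN]
    rw [if_neg h1, if_pos hiZ, if_pos hiN]
    have hlt : a i < 0 := (mem_filter.mp hiN).2
    rw [abs_of_neg hlt]; ring
  · have h1 : i ∈ Z ∆ N := by simp [mem_symmDiff, hiZ, hiN]
    rw [if_pos h1, if_pos hiZ, if_neg hiN]
    have hge : ¬ a i < 0 := fun h => hiN (mem_filter.mpr ⟨hZ hiZ, h⟩)
    rw [abs_of_nonneg (le_of_not_gt hge)]; ring
  · have h1 : i ∈ Z ∆ N := by simp [mem_symmDiff, hiZ, hiN]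
    rw [if_pos h1, if_neg hiZ, if_pos hiN]; ring
  · have h1 : i ∉ Z ∆ N := by simp [mem_symmDiff, hiZ, hiN]
    rw [if_neg h1, if_neg hiZ, if_neg hiN]; ring

lemma lo_littlewood_offord {α : Type*} [DecidableEq α] (T' : Finset α) (a : α → ℤ)
    (ha : ∀ i ∈ T', a i ≠ 0) (c : ℤ) :
    (T'.powerset.filter (fun Z => ∑ i ∈ Z, a i = c)).card
      ≤ T'.card.choose (T'.card / 2) := by
  classical
  set N := T'.filter (fun i => a i < 0) with hN
  set d := c + ∑ i ∈ N, |a i| with hd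
  set 𝒜 := T'.powerset.filter (fun W => ∑ i ∈ W, |a i| = d) with h𝒜
  have hNsub : N ⊆ T' := filter_subset _ _
  have step1 : (T'.powerset.filter (fun Z => ∑ i ∈ Z, a i = c)).card ≤ 𝒜.card := by
    apply Finset.card_le_card_of_injOn (fun Z => Z ∆ N)
    · intro Z hZ
      rw [mem_coe, mem_filter, mem_powerset] at hZ
      rw [h𝒜, mem_coe, mem_filter, mem_powerset]
      exact ⟨lo_symmDiff_subset hZ.1 hNsub,
        by rw [lo_symmDiff_sum T' Z a hZ.1, hZ.2]⟩
    · intro Z1 _ Z2 _ hEq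
      have := congrArg (fun W => W ∆ N) hEq
      simpa [symmDiff_symmDiff_cancel_right] using this
  have hanti : IsAntichain (· ⊆ ·) (𝒜 : Set (Finset α)) := by
    intro W1 hW1 W2 hW2 hne hsub
    simp only [h𝒜, coe_filter, Set.mem_setOf_eq, mem_coe, mem_filter, mem_powerset] at hW1 hW2
    have hsum : ∑ i ∈ W2 \ W1, |a i| + ∑ i ∈ W1, |a i| = ∑ i ∈ W2, |a i| :=
      Finset.sum_sdiff hsub
    have hzero : ∑ i ∈ W2 \ W1, |a i| = 0 := by
      rw [hW1.2, hW2.2] at hsum; linarith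
    have hne' : (W2 \ W1).Nonempty := by
      rw [Finset.sdiff_nonempty]
      intro h
      exact hne (Finset.Subset.antisymm hsub h)
    obtain ⟨i, hi⟩ := hne'
    have hiT : i ∈ T' := hW2.1 (Finset.mem_sdiff.mp hi).1
    have h1 : (1 : ℤ) ≤ |a i| := by
      have h0 : (0:ℤ) < |a i| := abs_pos.mpr (ha i hiT)
      omega
    have h2 : |a i| ≤ ∑ i ∈ W2 \ W1, |a i| :=
      Finset.single_le_sum (fun j _ => abs_nonneg (a j)) hi
    linarith
  set e : Finset α → Finset {x // x ∈ T'} := fun W => W.subtype (· ∈ T') with he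
  have hrec : ∀ W ∈ 𝒜, (e W).map (Function.Embedding.subtype _) = W := by
    intro W hW
    rw [he, Finset.subtype_map]
    apply Finset.filter_true_of_mem
    intro i hi
    exact (mem_powerset.mp (mem_filter.mp hW).1) hi
  have hcard : 𝒜.card = (𝒜.image e).card := by
    rw [Finset.card_image_of_injOn]
    intro W1 hW1 W2 hW2 hEq
    rw [← hrec W1 hW1, ← hrec W2 hW2]
    exact congrArg _ hEq
  have hanti' : IsAntichain (· ⊆ ·) ((𝒜.image e) : Set (Finset {x // x ∈ T'})) := by
    intro V1 hV1 V2 hV2 hne hsub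
    simp only [coe_image, Set.mem_image, mem_coe] at hV1 hV2
    obtain ⟨W1, hW1, rfl⟩ := hV1
    obtain ⟨W2, hW2, rfl⟩ := hV2
    refine hanti hW1 hW2 (fun h => hne (by rw [h])) ?_
    rw [← hrec W1 hW1, ← hrec W2 hW2]
    exact Finset.map_subset_map.mpr hsub
  have hfin := IsAntichain.sperner hanti'
  rw [Fintype.card_coe] at hfin
  omega

open Real

lemma chain_helper (T H N PR QR A B C0 EA EB E : ℝ)
    (hPR : 0 < PR) (hQR : 0 < QR) (hA0 : 0 ≤ A) (hB0 : 0 ≤ B)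
    (hH : 0 < H) (hNH : 0 < N - H - 1) (hN : 0 < N) (hC00 : 0 ≤ C0)
    (hA : π*PR*A^2 ≤ EA) (hB : π*QR*B^2 ≤ EB) (hE : EA*EB = E)
    (hC : 2*E ≤ π*N*C0^2)
    (hKP : T^2*H*(N-H-1) ≤ (H+1)^2*(2*PR)*(2*QR)) :
    (T*A*B)^2 ≤ C0^2 * (2*N*(H+1)^2/(π*H*(N-H-1))) := by
  have hπ := Real.pi_pos
  have hden : 0 < π*H*(N-H-1) := by positivity
  rw [show C0^2 * (2*N*(H+1)^2/(π*H*(N-H-1))) = (C0^2*(2*N*(H+1)^2))/(π*H*(N-H-1)) from by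
    ring, le_div_iff₀ hden]
  apply (mul_le_mul_iff_right₀ hπ).mp
  have hEA0 : 0 ≤ EA := le_trans (by positivity) hA
  have hEB0 : 0 ≤ EB := le_trans (by positivity) hB
  have hAB : (π*PR*A^2)*(π*QR*B^2) ≤ EA*EB :=
    mul_le_mul hA hB (by positivity) hEA0
  have hABC : (π*PR*A^2)*(π*QR*B^2) ≤ π*N*C0^2/2 := by
    rw [hE] at hAB; linarith
  have h5 : (π^2*A^2*B^2)*(T^2*H*(N-H-1)) ≤ (π^2*A^2*B^2)*((H+1)^2*(2*PR)*(2*QR)) :=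
    mul_le_mul_of_nonneg_left hKP (by positivity)
  have h6 : 4*(H+1)^2*((π*PR*A^2)*(π*QR*B^2)) ≤ 4*(H+1)^2*(π*N*C0^2/2) :=
    mul_le_mul_of_nonneg_left hABC (by positivity)
  nlinarith [h5, h6]

lemma wallis_choose_identity (p : ℕ) :
    ((2*p).choose p : ℝ)^2 * Real.Wallis.W p * (2*(p:ℝ)+1) = 16^p := by
  have hcn : (2*p).choose p * p.factorial * p.factorial = (2*p).factorial := by
    have := Nat.choose_mul_factorial_mul_factorial (show p ≤ 2*p by omega)
    rwa [show 2*p - p = p by omega] at this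
  have hc : ((2*p).choose p : ℝ) * (p.factorial : ℝ) * (p.factorial : ℝ)
      = ((2*p).factorial : ℝ) := by exact_mod_cast congrArg (Nat.cast (R := ℝ)) hcn
  have hW := Real.Wallis.W_eq_factorial_ratio p
  have h24 : (2:ℝ)^(4*p) = 16^p := by
    rw [pow_mul]; norm_num
  rw [hW, h24]
  have h1 : ((2*p).factorial : ℝ) ≠ 0 := Nat.cast_ne_zero.mpr (Nat.factorial_ne_zero _)
  have h2 : (2*(p:ℝ)+1) ≠ 0 := by positivity
  field_simp
  rw [← hc]; ring

lemma cb_lower (k : ℕ) : 2*(16:ℝ)^k ≤ π * (2*(k:ℝ)+1) * ((2*k).choose k : ℝ)^2 := by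
  have hid := wallis_choose_identity k
  have hW := Real.Wallis.W_le k
  nlinarith [sq_nonneg (((2*k).choose k : ℝ)), mul_le_mul_of_nonneg_left hW
    (mul_nonneg (sq_nonneg (((2*k).choose k : ℝ))) (by positivity : (0:ℝ) ≤ 2*(k:ℝ)+1))]

lemma cb_upper (p : ℕ) (hp : 1 ≤ p) : π * p * ((2*p).choose p : ℝ)^2 ≤ 16^p := by
  have hid := wallis_choose_identity p
  have hW := Real.Wallis.le_W p
  have h2p2 : (0:ℝ) < 2*(p:ℝ)+2 := by positivity
  have h1' : (2*(p:ℝ)+1) * (π/2) ≤ Real.Wallis.W p * (2*(p:ℝ)+2) := by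
    rw [div_mul_eq_mul_div, div_le_iff₀ h2p2] at hW
    linarith
  have hp1 : (1:ℝ) ≤ (p:ℝ) := by exact_mod_cast hp
  nlinarith [mul_le_mul_of_nonneg_left h1'
      (mul_nonneg (sq_nonneg (((2*p).choose p : ℝ))) (by positivity : (0:ℝ) ≤ 2*(p:ℝ)+1)),
    Real.pi_pos, sq_nonneg (((2*p).choose p : ℝ)),
    mul_nonneg (mul_nonneg (sq_nonneg (((2*p).choose p : ℝ))) Real.pi_pos.le) (sub_nonneg.mpr hp1)]

lemma cbodd (p : ℕ) : (2*(p+1)).choose (p+1) = 2 * ((2*p+1).choose p) := by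
  have h1 : (2*p+1).choose ((2*p+1)-(p+1)) = (2*p+1).choose (p+1) :=
    Nat.choose_symm (show p+1 ≤ 2*p+1 by omega)
  rw [show (2*p+1)-(p+1) = p by omega] at h1
  have h2 : (2*p+1+1).choose (p+1) = (2*p+1).choose p + (2*p+1).choose (p+1) :=
    Nat.choose_succ_succ (2*p+1) p
  rw [show 2*(p+1) = 2*p+1+1 by omega, h2, ← h1]
  omega

set_option maxHeartbeats 2000000 in
lemma partB (n t h : ℕ) (hn : Odd n) (ht1 : 1 ≤ t) (hth : t ≤ h+1)
    (hh2 : 2 ≤ h) (hhn : 2*h+1 ≤ n) (htn : 2*t+1 ≤ n) :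
    ((t * ((t-1).choose ((t-1)/2)) * ((n-t).choose ((n-t)/2)) : ℕ) : ℝ)
      ≤ ((n-1).choose ((n-1)/2) : ℝ) *
        Real.sqrt (2*n*((h:ℝ)+1)^2/(π*h*((n:ℝ)-h-1))) := by
  have hπ := Real.pi_pos
  have hh2R : (2:ℝ) ≤ (h:ℝ) := by exact_mod_cast hh2
  have hnhR : (0:ℝ) < (n:ℝ)-h-1 := by
    have : h+2 ≤ n := by omega
    have : (h:ℝ)+2 ≤ (n:ℝ) := by exact_mod_cast this
    linarith
  have hnR : (0:ℝ) < (n:ℝ) := by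
    have : 0 < n := by omega
    exact_mod_cast this
  have hden : (0:ℝ) < π*h*((n:ℝ)-h-1) := by positivity
  have hF2pos : (0:ℝ) < 2*n*((h:ℝ)+1)^2/(π*h*((n:ℝ)-h-1)) := by positivity
  have hC0nn : (0:ℝ) ≤ ((n-1).choose ((n-1)/2) : ℝ) := Nat.cast_nonneg _
  suffices core : ((t * ((t-1).choose ((t-1)/2)) * ((n-t).choose ((n-t)/2)) : ℕ) : ℝ)^2
      ≤ ((n-1).choose ((n-1)/2) : ℝ)^2 * (2*n*((h:ℝ)+1)^2/(π*h*((n:ℝ)-h-1))) by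
    set L : ℝ := ((t * ((t-1).choose ((t-1)/2)) * ((n-t).choose ((n-t)/2)) : ℕ) : ℝ)
    have hL0 : (0:ℝ) ≤ L := Nat.cast_nonneg _
    calc L = Real.sqrt (L^2) := (Real.sqrt_sq hL0).symm
      _ ≤ Real.sqrt (((n-1).choose ((n-1)/2) : ℝ)^2 * (2*n*((h:ℝ)+1)^2/(π*h*((n:ℝ)-h-1)))) :=
          Real.sqrt_le_sqrt core
      _ = ((n-1).choose ((n-1)/2) : ℝ) *
          Real.sqrt (2*n*((h:ℝ)+1)^2/(π*h*((n:ℝ)-h-1))) := by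
          rw [Real.sqrt_mul (sq_nonneg _), Real.sqrt_sq hC0nn]
  -- key polynomial inequality for t ≥ 2
  obtain ⟨k, hk⟩ := hn
  rcases eq_or_lt_of_le ht1 with h1 | ht2
  · -- t = 1
    have hF21 : (1:ℝ) ≤ 2*n*((h:ℝ)+1)^2/(π*h*((n:ℝ)-h-1)) := by
      rw [le_div_iff₀ hden, one_mul]
      nlinarith [Real.pi_le_four, mul_nonneg (mul_nonneg hnR.le (Nat.cast_nonneg (α := ℝ) h))
        (Nat.cast_nonneg (α := ℝ) h), mul_nonneg (Nat.cast_nonneg (α := ℝ) h) hnhR.le,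
        mul_pos hnR hnhR]
    rw [← h1]
    simp only [Nat.sub_self, Nat.choose_self, Nat.zero_div, mul_one, one_mul, Nat.div_one]
    nlinarith [mul_le_mul_of_nonneg_left hF21 (sq_nonneg ((n-1).choose ((n-1)/2) : ℝ))]
  · -- t ≥ 2
    have hKP : (t:ℝ)^2*h*((n:ℝ)-h-1) ≤ ((h:ℝ)+1)^2*((t:ℝ)-1)*((n:ℝ)-t) := by
      have ht2R : (2:ℝ) ≤ (t:ℝ) := by exact_mod_cast ht2
      have hthR : (t:ℝ) ≤ (h:ℝ)+1 := by exact_mod_cast hth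
      have htnR : 2*(t:ℝ)+1 ≤ (n:ℝ) := by exact_mod_cast htn
      have hf1 : (0:ℝ) ≤ (h:ℝ) - ((t:ℝ)-1) := by linarith
      have hf2 : (0:ℝ) ≤ ((n:ℝ)-1)*(((t:ℝ)-1)*(h:ℝ)-1)+2*((t:ℝ)-1)*(h:ℝ)+(h:ℝ)+((t:ℝ)-1) := by
        have hm : (1:ℝ) ≤ ((t:ℝ)-1)*(h:ℝ) := by nlinarith
        have hn1 : (0:ℝ) ≤ (n:ℝ)-1 := by linarith
        nlinarith [mul_nonneg hn1 (by linarith : (0:ℝ) ≤ ((t:ℝ)-1)*(h:ℝ)-1)]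
      nlinarith [mul_nonneg hf1 hf2]
    have hkn : (n:ℝ) = 2*(k:ℝ)+1 := by exact_mod_cast hk
    rcases Nat.even_or_odd (t-1) with he | ho
    · -- t - 1 even
      obtain ⟨p, hp⟩ := he
      have hp' : t = 2*p+1 := by omega
      have hp1 : 1 ≤ p := by omega
      have hpk : 2*p+1 ≤ k := by omega
      obtain ⟨q, hqk⟩ : ∃ q, p + q = k := ⟨k - p, by omega⟩
      have hq1 : 1 ≤ q := by omega
      have hnt : n - t = 2*q := by omega
      have ec1 : (t-1).choose ((t-1)/2) = (2*p).choose p := by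
        rw [show t-1 = 2*p by omega]; congr 1; omega
      have ec2 : (n-t).choose ((n-t)/2) = (2*q).choose q := by
        rw [hnt]; congr 1; omega
      have ec3 : (n-1).choose ((n-1)/2) = (2*k).choose k := by
        rw [show n-1 = 2*k by omega]; congr 1; omega
      rw [ec1, ec2, ec3]
      have hA := cb_upper p hp1
      have hB := cb_upper q hq1
      have hC := cb_lower k
      rw [show 2*(k:ℝ)+1 = (n:ℝ) from by rw [hkn]] at hC
      have et : (t:ℝ)-1 = 2*(p:ℝ) := by
        have : (t:ℝ) = 2*(p:ℝ)+1 := by exact_mod_cast hp'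
        linarith
      have ent : (n:ℝ)-(t:ℝ) = 2*(q:ℝ) := by
        have h1 : n = t + 2*q := by omega
        have : (n:ℝ) = (t:ℝ) + 2*(q:ℝ) := by exact_mod_cast h1
        linarith
      rw [et, ent] at hKP
      have hE : (16:ℝ)^p * (16:ℝ)^q = (16:ℝ)^k := by rw [← pow_add, hqk]
      push_cast
      exact chain_helper (t:ℝ) (h:ℝ) (n:ℝ) (p:ℝ) (q:ℝ)
        ((2*p).choose p : ℝ) ((2*q).choose q : ℝ) ((2*k).choose k : ℝ)
        ((16:ℝ)^p) ((16:ℝ)^q) ((16:ℝ)^k)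
        (by exact_mod_cast hp1) (by exact_mod_cast hq1)
        (Nat.cast_nonneg _) (Nat.cast_nonneg _) (by linarith) hnhR hnR
        (Nat.cast_nonneg _) hA hB hE hC hKP
    · -- t - 1 odd
      obtain ⟨p, hp⟩ := ho
      have hp' : t = 2*p+2 := by omega
      have hpk : 2*p+2 ≤ k := by omega
      obtain ⟨q, hqk⟩ : ∃ q, p + q + 1 = k := ⟨k - p - 1, by omega⟩
      have hq1 : 1 ≤ q := by omega
      have hnt : n - t = 2*q+1 := by omega
      have ec1 : (t-1).choose ((t-1)/2) = (2*p+1).choose p := by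
        rw [show t-1 = 2*p+1 by omega]; congr 1; omega
      have ec2 : (n-t).choose ((n-t)/2) = (2*q+1).choose q := by
        rw [hnt]; congr 1; omega
      have ec3 : (n-1).choose ((n-1)/2) = (2*k).choose k := by
        rw [show n-1 = 2*k by omega]; congr 1; omega
      rw [ec1, ec2, ec3]
      have hA0 := cb_upper (p+1) (by omega)
      have hB0 := cb_upper (q+1) (by omega)
      have hC := cb_lower k
      rw [show 2*(k:ℝ)+1 = (n:ℝ) from by rw [hkn]] at hC
      have hcA : ((2*(p+1)).choose (p+1) : ℝ) = 2*((2*p+1).choose p : ℝ) := by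
        exact_mod_cast congrArg (Nat.cast (R := ℝ)) (cbodd p)
      have hcB : ((2*(q+1)).choose (q+1) : ℝ) = 2*((2*q+1).choose q : ℝ) := by
        exact_mod_cast congrArg (Nat.cast (R := ℝ)) (cbodd q)
      rw [hcA] at hA0
      rw [hcB] at hB0
      push_cast at hA0 hB0
      have hA : π*((p:ℝ)+1)*((2*p+1).choose p : ℝ)^2 ≤ 4*(16:ℝ)^p := by
        nlinarith [hA0, pow_succ (16:ℝ) p]
      have hB : π*((q:ℝ)+1)*((2*q+1).choose q : ℝ)^2 ≤ 4*(16:ℝ)^q := by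
        nlinarith [hB0, pow_succ (16:ℝ) q]
      have hE : (4*(16:ℝ)^p) * (4*(16:ℝ)^q) = (16:ℝ)^k := by
        rw [show (4*(16:ℝ)^p) * (4*(16:ℝ)^q) = 16^(p+q+1) from by
          rw [pow_succ, pow_add]; ring, hqk]
      have et : (t:ℝ)-1 = 2*(p:ℝ)+1 := by
        have : (t:ℝ) = 2*(p:ℝ)+2 := by exact_mod_cast hp'
        linarith
      have ent : (n:ℝ)-(t:ℝ) = 2*(q:ℝ)+1 := by
        have h1 : n = t + (2*q+1) := by omega
        have : (n:ℝ) = (t:ℝ) + (2*(q:ℝ)+1) := by exact_mod_cast h1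
        linarith
      rw [et, ent] at hKP
      have hKP2 : (t:ℝ)^2*h*((n:ℝ)-h-1)
          ≤ ((h:ℝ)+1)^2*(2*((p:ℝ)+1))*(2*((q:ℝ)+1)) := by
        have hnn : (0:ℝ) ≤ 2*(p:ℝ)+2*(q:ℝ)+3 := by positivity
        nlinarith [hKP, mul_nonneg (sq_nonneg ((h:ℝ)+1)) hnn]
      push_cast
      exact chain_helper (t:ℝ) (h:ℝ) (n:ℝ) ((p:ℝ)+1) ((q:ℝ)+1)
        ((2*p+1).choose p : ℝ) ((2*q+1).choose q : ℝ) ((2*k).choose k : ℝ)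
        (4*(16:ℝ)^p) (4*(16:ℝ)^q) ((16:ℝ)^k)
        (by positivity) (by positivity)
        (Nat.cast_nonneg _) (Nat.cast_nonneg _) (by linarith) hnhR hnR
        (Nat.cast_nonneg _) hA hB hE hC hKP2

open Finset

lemma finset_inter_union_sdiff {α : Type*} [DecidableEq α] (s t : Finset α) :
    s ∩ t ∪ s \ t = s := by
  ext i; simp; tauto


lemma int_no_half (S b : ℤ) : 2*S ≠ 2*b+1 := by omega

lemma int_two_ne (z : ℤ) (h : z ≠ 0) : 2*z ≠ 0 := by omega

lemma nat_sub_helper (x y z k : ℕ) (h1 : x + y = z) (h2 : z = k) : x = k - y := by omega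

set_option maxHeartbeats 1000000 in
lemma partA (n t k : ℕ) (a : Fin n → ℤ) (b : ℤ) (hk : n = 2*k+1)
    (hT : (Finset.univ.filter (fun i => a i ≠ 0)).card = t) :
    Set.ncard {x : Fin n → ℝ |
        (∃ ℓ : Fin n, x ℓ = 1 / 2 ∧ ∀ i, i ≠ ℓ → (x i = 0 ∨ x i = 1)) ∧
        ∑ i, x i = (n : ℝ) / 2 ∧
        (b : ℝ) < ∑ i, (a i : ℝ) * x i ∧ ∑ i, (a i : ℝ) * x i < (b : ℝ) + 1}
      ≤ t * (((t-1).choose ((t-1)/2)) * ((n-t).choose ((n-t)/2))) := by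
  classical
  set T : Finset (Fin n) := Finset.univ.filter (fun i => a i ≠ 0) with hTdef
  set P : Finset (Fin n × Finset (Fin n)) := Finset.univ.filter
    (fun pr => pr.1 ∉ pr.2 ∧ pr.2.card = k ∧ 2*(∑ i ∈ pr.2, a i) + a pr.1 = 2*b+1) with hPdef
  set f : Fin n × Finset (Fin n) → (Fin n → ℝ) :=
    (fun pr => fun i => if i = pr.1 then (1:ℝ)/2 else if i ∈ pr.2 then 1 else 0) with hfdef
  -- Step 1 : the solution set is contained in the image of P
  have hsub : {x : Fin n → ℝ |
        (∃ ℓ : Fin n, x ℓ = 1 / 2 ∧ ∀ i, i ≠ ℓ → (x i = 0 ∨ x i = 1)) ∧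
        ∑ i, x i = (n : ℝ) / 2 ∧
        (b : ℝ) < ∑ i, (a i : ℝ) * x i ∧ ∑ i, (a i : ℝ) * x i < (b : ℝ) + 1}
      ⊆ ↑(P.image f) := by
    rintro x ⟨⟨ℓ, hℓ, h01⟩, hsum, hb1, hb2⟩
    set A : Finset (Fin n) := Finset.univ.filter (fun i => x i = 1) with hAdef
    have hℓA : ℓ ∉ A := by
      simp only [hAdef, mem_filter, mem_univ, true_and, hℓ]
      norm_num
    have key1 : ∀ i, i ≠ ℓ → x i = (if i ∈ A then (1:ℝ) else 0) := by
      intro i hi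
      rcases h01 i hi with h0 | h1
      · have : i ∉ A := by
          simp only [hAdef, mem_filter, mem_univ, true_and, h0]
          norm_num
        simp [this, h0]
      · have : i ∈ A := by simp [hAdef, h1]
        simp [this, h1]
    have hAsub : A ⊆ Finset.univ.erase ℓ := by
      intro i hi
      refine Finset.mem_erase.mpr ⟨?_, mem_univ i⟩
      rintro rfl
      exact hℓA hi
    have hsplit : ∑ i, x i = x ℓ + ∑ i ∈ Finset.univ.erase ℓ, x i :=
      (Finset.add_sum_erase _ _ (mem_univ ℓ)).symm
    have h2 : ∑ i ∈ Finset.univ.erase ℓ, x i = (A.card : ℝ) := by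
      rw [Finset.sum_congr rfl (fun i hi => key1 i (Finset.ne_of_mem_erase hi)),
        Finset.sum_ite_mem, Finset.inter_eq_right.mpr hAsub]
      simp
    have hcardA : A.card = k := by
      rw [hsplit, hℓ, h2] at hsum
      have : (A.card : ℝ) = k := by
        have hnr : (n:ℝ) = 2*(k:ℝ)+1 := by exact_mod_cast hk
        rw [hnr] at hsum
        linarith
      exact_mod_cast this
    have hip : ∑ i, (a i:ℝ) * x i = ((∑ i ∈ A, a i : ℤ) : ℝ) + (a ℓ : ℝ)/2 := by
      have hsplit2 : ∑ i, (a i:ℝ) * x i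
          = (a ℓ:ℝ) * x ℓ + ∑ i ∈ Finset.univ.erase ℓ, (a i:ℝ) * x i :=
        (Finset.add_sum_erase _ _ (mem_univ ℓ)).symm
      have h3 : ∑ i ∈ Finset.univ.erase ℓ, (a i:ℝ) * x i = ((∑ i ∈ A, a i : ℤ) : ℝ) := by
        have : ∀ i ∈ Finset.univ.erase ℓ, (a i:ℝ) * x i = (if i ∈ A then (a i:ℝ) else 0) := by
          intro i hi
          rw [key1 i (Finset.ne_of_mem_erase hi)]
          by_cases hiA : i ∈ A <;> simp [hiA]
        rw [Finset.sum_congr rfl this, Finset.sum_ite_mem, Finset.inter_eq_right.mpr hAsub]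
        push_cast
        rfl
      rw [hsplit2, h3, hℓ]
      ring
    have hint : 2*(∑ i ∈ A, a i) + a ℓ = 2*b+1 := by
      rw [hip] at hb1 hb2
      have e1 : (2*b : ℤ) < 2*(∑ i ∈ A, a i) + a ℓ := by
        have : (2*(b:ℝ)) < 2*((∑ i ∈ A, a i : ℤ):ℝ) + (a ℓ:ℝ) := by linarith
        exact_mod_cast this
      have e2 : 2*(∑ i ∈ A, a i) + a ℓ < 2*b+2 := by
        have : 2*((∑ i ∈ A, a i : ℤ):ℝ) + (a ℓ:ℝ) < 2*(b:ℝ)+2 := by linarith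
        exact_mod_cast this
      omega
    refine Finset.mem_coe.mpr (Finset.mem_image.mpr ⟨⟨ℓ, A⟩, ?_, ?_⟩)
    · rw [hPdef, Finset.mem_filter]
      exact ⟨mem_univ _, hℓA, hcardA, hint⟩
    · funext i
      by_cases hiℓ : i = ℓ
      · subst hiℓ
        simp [hfdef, hℓ]
      · rw [hfdef]
        simp only [hiℓ, if_false]
        rw [key1 i hiℓ]
  have step1 : Set.ncard {x : Fin n → ℝ |
        (∃ ℓ : Fin n, x ℓ = 1 / 2 ∧ ∀ i, i ≠ ℓ → (x i = 0 ∨ x i = 1)) ∧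
        ∑ i, x i = (n : ℝ) / 2 ∧
        (b : ℝ) < ∑ i, (a i : ℝ) * x i ∧ ∑ i, (a i : ℝ) * x i < (b : ℝ) + 1} ≤ P.card := by
    calc Set.ncard _ ≤ Set.ncard ↑(P.image f) :=
          Set.ncard_le_ncard hsub (Finset.finite_toSet _)
      _ = (P.image f).card := Set.ncard_coe_finset _
      _ ≤ P.card := Finset.card_image_le
  -- Step 2 : fiber decomposition over the support
  have hP1 : ∀ pr ∈ P, pr.1 ∈ T := by
    intro pr hpr
    rw [hPdef, Finset.mem_filter] at hpr
    rw [hTdef, Finset.mem_filter]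
    refine ⟨mem_univ _, ?_⟩
    intro h0
    have heq := hpr.2.2.2
    rw [h0, add_zero] at heq
    exact int_no_half _ _ heq
  have step2 : P.card = ∑ ℓ ∈ T, (P.filter (fun pr => pr.1 = ℓ)).card :=
    Finset.card_eq_sum_card_fiberwise hP1
  -- Step 3 : per-fiber bound
  have step3 : ∀ ℓ ∈ T, (P.filter (fun pr => pr.1 = ℓ)).card
      ≤ ((t-1).choose ((t-1)/2)) * ((n-t).choose ((n-t)/2)) := by
    intro ℓ hℓT
    set Q : Finset (Finset (Fin n)) := Finset.univ.filter
      (fun A => ℓ ∉ A ∧ A.card = k ∧ 2*(∑ i ∈ A, a i) + a ℓ = 2*b+1) with hQdef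
    have hPQ : (P.filter (fun pr => pr.1 = ℓ)).card ≤ Q.card := by
      apply Finset.card_le_card_of_injOn Prod.snd
      · intro pr hpr
        rw [Finset.mem_coe, Finset.mem_filter] at hpr
        obtain ⟨hprP, hpr1⟩ := hpr
        rw [hPdef, Finset.mem_filter] at hprP
        rw [hQdef, Finset.mem_coe, Finset.mem_filter]
        rw [hpr1] at hprP
        exact ⟨mem_univ _, hprP.2⟩
      · intro pr1 h1 pr2 h2 hsnd
        rw [Finset.mem_coe, Finset.mem_filter] at h1 h2
        exact Prod.ext (h1.2.trans h2.2.symm) hsnd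
    set T' : Finset (Fin n) := T.erase ℓ with hT'def
    have hT'card : T'.card = t - 1 := by
      rw [hT'def, Finset.card_erase_of_mem hℓT, hT]
    set Zc : Finset (Finset (Fin n)) := T'.powerset.filter
      (fun Z => ∑ i ∈ Z, 2*(a i) = 2*b+1 - a ℓ) with hZcdef
    have hQZ : ∀ A ∈ Q, A ∩ T' ∈ Zc := by
      intro A hA
      rw [hQdef, Finset.mem_filter] at hA
      obtain ⟨-, hℓA, hcA, hsA⟩ := hA
      rw [hZcdef, Finset.mem_filter, Finset.mem_powerset]
      refine ⟨Finset.inter_subset_right, ?_⟩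
      have hAT : A ∩ T' = A.filter (fun i => a i ≠ 0) := by
        ext i
        simp only [Finset.mem_inter, hT'def, Finset.mem_erase, hTdef, Finset.mem_filter,
          mem_univ, true_and]
        constructor
        · rintro ⟨h1, _, h3⟩; exact ⟨h1, h3⟩
        · rintro ⟨h1, h2⟩
          exact ⟨h1, fun hiℓ => hℓA (hiℓ ▸ h1), h2⟩
      rw [hAT, ← Finset.mul_sum, Finset.sum_filter_ne_zero]
      linarith
    have hfib : Q.card = ∑ Z ∈ Zc, (Q.filter (fun A => A ∩ T' = Z)).card :=
      Finset.card_eq_sum_card_fiberwise hQZ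
    have hfibbound : ∀ Z ∈ Zc, (Q.filter (fun A => A ∩ T' = Z)).card
        ≤ (n-t).choose ((n-t)/2) := by
      intro Z hZ
      rw [hZcdef, Finset.mem_filter, Finset.mem_powerset] at hZ
      have hcard1 : (Q.filter (fun A => A ∩ T' = Z)).card
          ≤ (Finset.powersetCard (k - Z.card) (Finset.univ \ T)).card := by
        apply Finset.card_le_card_of_injOn (fun A => A \ T')
        · intro A hA
          dsimp only
          rw [Finset.mem_coe, Finset.mem_filter] at hA
          obtain ⟨hAQ, hAZ⟩ := hA
          rw [hQdef, Finset.mem_filter] at hAQ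
          obtain ⟨-, hℓA, hcA, -⟩ := hAQ
          rw [Finset.mem_coe, Finset.mem_powersetCard]
          constructor
          · intro i hi
            rw [Finset.mem_sdiff] at hi ⊢
            refine ⟨mem_univ _, ?_⟩
            intro hiT
            by_cases hiℓ : i = ℓ
            · exact hℓA (hiℓ ▸ hi.1)
            · exact hi.2 (by rw [hT'def]; exact Finset.mem_erase.mpr ⟨hiℓ, hiT⟩)
          · have hcs := Finset.card_sdiff_add_card_inter A T'
            rw [hAZ] at hcs
            exact nat_sub_helper _ _ _ _ hcs hcA
        · intro A1 h1 A2 h2 hdiff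
          dsimp only at hdiff
          rw [Finset.mem_coe, Finset.mem_filter] at h1 h2
          have e1 : A1 = A1 ∩ T' ∪ A1 \ T' := (finset_inter_union_sdiff A1 T').symm
          have e2 : A2 = A2 ∩ T' ∪ A2 \ T' := (finset_inter_union_sdiff A2 T').symm
          rw [e1, e2, h1.2, h2.2, hdiff]
      rw [Finset.card_powersetCard] at hcard1
      have hU : (Finset.univ \ T).card = n - t := by
        rw [Finset.card_sdiff_of_subset (Finset.subset_univ _), hT, Finset.card_univ, Fintype.card_fin]
      rw [hU] at hcard1
      exact hcard1.trans (Nat.choose_le_middle _ _)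
    have hZcbound : Zc.card ≤ (t-1).choose ((t-1)/2) := by
      have := lo_littlewood_offord T' (fun i => 2 * a i)
        (fun i hi => int_two_ne _ (by
          have hiT : i ∈ T := Finset.mem_of_mem_erase (hT'def ▸ hi)
          rw [hTdef, Finset.mem_filter] at hiT
          exact hiT.2)) (2*b+1 - a ℓ)
      rw [hT'card] at this
      exact this
    calc (P.filter (fun pr => pr.1 = ℓ)).card ≤ Q.card := hPQ
      _ = ∑ Z ∈ Zc, (Q.filter (fun A => A ∩ T' = Z)).card := hfib
      _ ≤ ∑ Z ∈ Zc, (n-t).choose ((n-t)/2) := Finset.sum_le_sum hfibbound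
      _ = Zc.card * ((n-t).choose ((n-t)/2)) := by rw [Finset.sum_const, smul_eq_mul]
      _ ≤ ((t-1).choose ((t-1)/2)) * ((n-t).choose ((n-t)/2)) :=
          Nat.mul_le_mul_right _ hZcbound
  calc Set.ncard _ ≤ P.card := step1
    _ = ∑ ℓ ∈ T, (P.filter (fun pr => pr.1 = ℓ)).card := step2
    _ ≤ ∑ _ℓ ∈ T, ((t-1).choose ((t-1)/2)) * ((n-t).choose ((n-t)/2)) :=
        Finset.sum_le_sum step3
    _ = t * (((t-1).choose ((t-1)/2)) * ((n-t).choose ((n-t)/2))) := by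
        rw [Finset.sum_const, smul_eq_mul, hT]


open Real in
/-- Combined bound from the proof of Theorem 1.2: for `n` odd, `a ∈ ℤ^n` of
support size `t` with `1 ≤ t ≤ s ≤ ⌊n/2⌋` (`s ≥ 2`), `b ∈ ℤ`, and `h` the
largest even number not exceeding `s`, the number of optimal LP vertices of the
Jeroslow polytope (points with exactly one coordinate `1/2`, all others in
`{0,1}`, and coordinate sum `n/2`) lying strictly inside the split set
`{x : b < ⟨a,x⟩ < b+1}` is at most
`C(n-1, (n-1)/2) * √(2n(h+1)² / (π h (n-h-1)))`. -/
theorem split_set_vertices_sqrt_bound (n s h t : ℕ) (hn : Odd n)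
    (a : Fin n → ℤ) (hT : (Finset.univ.filter (fun i => a i ≠ 0)).card = t)
    (ht1 : 1 ≤ t) (hts : t ≤ s) (hs1 : 2 ≤ s) (hs2 : s ≤ n / 2)
    (hh : Even h ∧ h ≤ s ∧ s < h + 2) (b : ℤ) :
    (Set.ncard {x : Fin n → ℝ |
        (∃ ℓ : Fin n, x ℓ = 1 / 2 ∧ ∀ i, i ≠ ℓ → (x i = 0 ∨ x i = 1)) ∧
        ∑ i, x i = (n : ℝ) / 2 ∧
        (b : ℝ) < ∑ i, (a i : ℝ) * x i ∧ ∑ i, (a i : ℝ) * x i < (b : ℝ) + 1} : ℝ)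
      ≤ ((n - 1).choose ((n - 1) / 2) : ℝ) *
        Real.sqrt (2 * n * (h + 1) ^ 2 / (π * h * ((n : ℝ) - h - 1))) := by
  obtain ⟨hhe, hhs, hsh⟩ := hh
  obtain ⟨k, hk⟩ := hn
  obtain ⟨m, hm⟩ := hhe
  have hth : t ≤ h + 1 := by omega
  have hh2 : 2 ≤ h := by omega
  have hhn : 2*h+1 ≤ n := by omega
  have htn : 2*t+1 ≤ n := by omega
  have hA := partA n t k a b hk hT
  have hB := partB n t h ⟨k, hk⟩ ht1 hth hh2 hhn htn
  calc (Set.ncard {x : Fin n → ℝ |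
        (∃ ℓ : Fin n, x ℓ = 1 / 2 ∧ ∀ i, i ≠ ℓ → (x i = 0 ∨ x i = 1)) ∧
        ∑ i, x i = (n : ℝ) / 2 ∧
        (b : ℝ) < ∑ i, (a i : ℝ) * x i ∧ ∑ i, (a i : ℝ) * x i < (b : ℝ) + 1} : ℝ)
      ≤ ((t * (((t-1).choose ((t-1)/2)) * ((n-t).choose ((n-t)/2))) : ℕ) : ℝ) := by
        exact_mod_cast hA
    _ = ((t * ((t-1).choose ((t-1)/2)) * ((n-t).choose ((n-t)/2)) : ℕ) : ℝ) := by
        rw [mul_assoc]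
    _ ≤ ((n - 1).choose ((n - 1) / 2) : ℝ) *
        Real.sqrt (2 * n * (h + 1) ^ 2 / (π * h * ((n : ℝ) - h - 1))) := hB
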